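/- For every integer k ≥ 1 and every even m with 2 ≤ m ≤ 2^k, the element [y, x, …(m−2 copies of x)…, x, y] of G_k lies in the subgroup ⟨[y, x, …(2j−1 copies of x)…, x, y] : m/2 ≤ j ≤ 2^(k-1)⟩. -/

import Mathlib

open Subgroup
open scoped IsMulCommutative

namespace P2G

/-- The commutator `[a,b] = a⁻¹ b⁻¹ a b` (left-normed convention of the paper). -/
def comm {M : Type*} [Group M] (a b : M) : M := a⁻¹ * b⁻¹ * a * b

def X : FreeGroup (Fin 2) := FreeGroup.of 0
def Y : FreeGroup (Fin 2) := FreeGroup.of 1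

/-- `y_j = x^(-j) y x^j` in the free group. -/
def yF (j : ℤ) : FreeGroup (Fin 2) := X ^ (-j) * Y * X ^ j

/-- Relations for `G_k`:
`x^(2^(k+1)) = y^4 = [x^(2^k), y] = [y^2, x] = 1` and
`[y_0,y_i]^2 = [y_0,y_i,x] = [y_0,y_i,y] = 1` for `1 ≤ i ≤ 2^(k-1)`. -/
def rels (k : ℕ) : Set (FreeGroup (Fin 2)) :=
  {X ^ 2 ^ (k + 1), Y ^ 4, comm (X ^ 2 ^ k) Y, comm (Y ^ 2) X} ∪
    ⋃ i ∈ Set.Icc 1 (2 ^ (k - 1)),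
      {comm (yF 0) (yF i) ^ 2, comm (comm (yF 0) (yF i)) X, comm (comm (yF 0) (yF i)) Y}

/-- The group `G_k`, given by the above presentation. -/
abbrev G (k : ℕ) := PresentedGroup (rels k)

/-- The generator `x` of `G_k`. -/
def x (k : ℕ) : G k := PresentedGroup.of 0

/-- The generator `y` of `G_k`. -/
def y (k : ℕ) : G k := PresentedGroup.of 1

/-- `y_j = x^(-j) y x^j` in `G_k`. -/
def yg (k : ℕ) (j : ℤ) : G k := x k ^ (-j) * y k * x k ^ j

/-- `H_k`, the normal closure of `y` in `G_k`. -/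
def Hsub (k : ℕ) : Subgroup (G k) := Subgroup.normalClosure {y k}

/-- `Z_k`, the normal closure in `G_k` of `{x^(2^k), y^2} ∪ {[y_0,y_i] : 1 ≤ i ≤ 2^(k-1)}`. -/
def Zsub (k : ℕ) : Subgroup (G k) :=
  Subgroup.normalClosure ({x k ^ 2 ^ k, y k ^ 2} ∪
    {g | ∃ i : ℕ, 1 ≤ i ∧ i ≤ 2 ^ (k - 1) ∧ g = comm (yg k 0) (yg k i)})

/-- `G_k^(2^j)`, the subgroup generated by all `2^j`-th powers of elements of `G_k`. -/
def pow2 (k j : ℕ) : Subgroup (G k) := Subgroup.closure (Set.range fun g : G k => g ^ 2 ^ j)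

/-- `w = y_(2^k − 1) y_(2^k − 2) ⋯ y_1 y_0` in `G_k`. -/
def w (k : ℕ) : G k := (((List.range (2 ^ k)).reverse).map fun j => yg k j).prod

/-- The left-normed commutator `c k i = [y, x, …(i copies of x)…, x]`; `c k 0 = y`. -/
def c (k : ℕ) : ℕ → G k
  | 0 => y k
  | i + 1 => comm (c k i) (x k)

/-- `γ_m(G_k)`, the `m`-th term of the lower central series (`γ_1 = G_k`). -/
abbrev gamma (k m : ℕ) : Subgroup (G k) := Subgroup.lowerCentralSeries (⊤ : Subgroup (G k)) (m - 1)

/-! ### basic commutator identities -/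

section CommId
variable {M : Type*} [Group M] (a b g : M)

lemma comm_eq : comm a b = (b * a)⁻¹ * (a * b) := by unfold comm; group

lemma comm_eq_one_iff : comm a b = 1 ↔ a * b = b * a := by
  rw [comm_eq, inv_mul_eq_one]; exact eq_comm

lemma comm_inv : (comm a b)⁻¹ = comm b a := by unfold comm; group

lemma conj_comm : g⁻¹ * comm a b * g = comm (g⁻¹ * a * g) (g⁻¹ * b * g) := by
  unfold comm; group

end CommId

/-! ### relations in `G k` -/

section Grp
variable (k : ℕ)

lemma mk_eq_one {r : FreeGroup (Fin 2)} (h : r ∈ rels k) :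
    PresentedGroup.mk (rels k) r = 1 :=
  (QuotientGroup.eq_one_iff r).mpr (Subgroup.subset_normalClosure h)

lemma mk_X : PresentedGroup.mk (rels k) X = x k := rfl
lemma mk_Y : PresentedGroup.mk (rels k) Y = y k := rfl

lemma mk_comm (a b : FreeGroup (Fin 2)) :
    PresentedGroup.mk (rels k) (comm a b) = comm (PresentedGroup.mk (rels k) a)
      (PresentedGroup.mk (rels k) b) := by
  unfold comm; simp

lemma mk_yF (j : ℤ) : PresentedGroup.mk (rels k) (yF j) = yg k j := by
  unfold yF yg; simp [mk_X, mk_Y]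

lemma rel3 : comm (x k ^ (2 ^ k : ℕ)) (y k) = 1 := by
  have h : comm (X ^ 2 ^ k) Y ∈ rels k := by
    left; simp [Set.mem_insert_iff]
  have := mk_eq_one k h
  rwa [mk_comm, map_pow, mk_X, mk_Y] at this

lemma relB (i : ℤ) (h1 : 1 ≤ i) (h2 : i ≤ 2 ^ (k - 1)) :
    comm (yg k 0) (yg k i) ^ 2 = 1 ∧
    comm (comm (yg k 0) (yg k i)) (x k) = 1 ∧
    comm (comm (yg k 0) (yg k i)) (y k) = 1 := by
  have hmem : ∀ r ∈ ({comm (yF 0) (yF i) ^ 2, comm (comm (yF 0) (yF i)) X,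
      comm (comm (yF 0) (yF i)) Y} : Set (FreeGroup (Fin 2))), r ∈ rels k := by
    intro r hr
    right
    exact Set.mem_biUnion (Set.mem_Icc.mpr ⟨h1, h2⟩) hr
  refine ⟨?_, ?_, ?_⟩
  · have := mk_eq_one k (hmem _ (Or.inl rfl))
    rwa [map_pow, mk_comm, mk_yF, mk_yF] at this
  · have := mk_eq_one k (hmem _ (Or.inr (Or.inl rfl)))
    rwa [mk_comm, mk_comm, mk_yF, mk_yF, mk_X] at this
  · have := mk_eq_one k (hmem _ (Or.inr (Or.inr rfl)))
    rwa [mk_comm, mk_comm, mk_yF, mk_yF, mk_Y] at this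

/-- an element commuting with `x` and `y` is central -/
lemma central_of {z : G k} (hx : z * x k = x k * z) (hy : z * y k = y k * z) :
    z ∈ Subgroup.center (G k) := by
  rw [Subgroup.mem_center_iff]
  intro g
  have hg : g ∈ Subgroup.centralizer {z} := by
    refine PresentedGroup.generated_by (rels k) _ (fun j => ?_) g
    rw [Subgroup.mem_centralizer_iff]
    intro h hh
    rw [Set.mem_singleton_iff] at hh
    subst hh
    fin_cases j
    · exact hx
    · exact hy
  exact (Subgroup.mem_centralizer_iff.mp hg z rfl).symm

lemma x_pow_central : (x k ^ (2 ^ k : ℕ)) ∈ Subgroup.center (G k) := by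
  apply central_of
  · exact ((Commute.refl (x k)).pow_left _)
  · exact ((comm_eq_one_iff _ _).mp (rel3 k))


/-- conjugation by powers of `x` shifts `yg` -/
lemma conj_yg (a t : ℤ) : x k ^ (-t) * yg k a * x k ^ t = yg k (a + t) := by
  unfold yg; group

lemma conj_yg' (a : ℤ) : x k * yg k a * (x k)⁻¹ = yg k (a - 1) := by
  have := conj_yg k a (-1)
  simpa [zpow_neg, zpow_one, sub_eq_add_neg] using this

lemma yg_mod {a b : ℤ} (h : (2 ^ k : ℤ) ∣ b - a) : yg k a = yg k b := by
  obtain ⟨q, hq⟩ := h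
  have hb : b = a + 2 ^ k * q := by linarith
  subst hb
  set g : G k := x k ^ ((2 ^ k : ℤ) * q) with hg
  have hgc : g ∈ Subgroup.center (G k) := by
    have : g = (x k ^ (2 ^ k : ℕ)) ^ q := by
      rw [hg, ← zpow_natCast (x k), ← zpow_mul]; norm_num
    rw [this]
    exact Subgroup.zpow_mem _ (x_pow_central k) q
  have hgy : g⁻¹ * y k * g = y k := by
    have := (Subgroup.mem_center_iff.mp hgc (y k)).symm
    rw [mul_assoc, ← this, ← mul_assoc, inv_mul_cancel, one_mul]
  have e1 : x k ^ (-(a + 2 ^ k * q)) = x k ^ (-a) * g⁻¹ := by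
    rw [hg, ← zpow_neg, ← zpow_add]; ring_nf
  have e2 : x k ^ (a + 2 ^ k * q) = g * x k ^ a := by
    rw [hg, ← zpow_add]; ring_nf
  unfold yg
  rw [e1, e2]
  have hstep : x k ^ (-a) * g⁻¹ * y k * (g * x k ^ a)
      = x k ^ (-a) * (g⁻¹ * y k * g) * x k ^ a := by group
  rw [hstep, hgy]

/-! ### the central commutators -/

def BZ (j : ℤ) : G k := comm (yg k 0) (yg k j)

lemma yg_zero : yg k 0 = y k := by unfold yg; simp

lemma BZ_zero : BZ k 0 = 1 := by unfold BZ comm; group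

lemma BZ_mod {a b : ℤ} (h : (2 ^ k : ℤ) ∣ b - a) : BZ k a = BZ k b := by
  unfold BZ; rw [yg_mod k h]

lemma conj_BZ (j t : ℤ) : x k ^ (-t) * BZ k j * x k ^ t = comm (yg k t) (yg k (j + t)) := by
  unfold BZ
  have h := conj_comm (yg k 0) (yg k j) (x k ^ t)
  rw [← zpow_neg] at h
  rw [h, conj_yg, conj_yg, zero_add]

lemma BZ_neg_conj (j : ℤ) : BZ k (-j) = x k ^ j * (BZ k j)⁻¹ * x k ^ (-j) := by
  have h := conj_BZ k j (-j)
  rw [neg_neg, add_neg_cancel] at h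
  have h2 : comm (yg k (-j)) (yg k 0) = (BZ k (-j))⁻¹ := by
    unfold BZ; rw [comm_inv]
  rw [h2] at h
  rw [← inv_inv (BZ k (-j)), ← h]; group

lemma BZ_base (i : ℤ) (h1 : 1 ≤ i) (h2 : i ≤ 2 ^ (k - 1)) :
    BZ k i ∈ Subgroup.center (G k) ∧ BZ k i ^ 2 = 1 := by
  obtain ⟨hsq, hx, hy⟩ := relB k i h1 h2
  exact ⟨central_of k ((comm_eq_one_iff _ _).mp hx) ((comm_eq_one_iff _ _).mp hy), hsq⟩

lemma BZ_central_sq (hk : 1 ≤ k) (j : ℤ) :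
    BZ k j ∈ Subgroup.center (G k) ∧ BZ k j ^ 2 = 1 := by
  set n2 : ℤ := 2 ^ k with hn2
  have h2 : (0 : ℤ) < n2 := by positivity
  set r : ℤ := j % n2 with hrdef
  have hr0 : 0 ≤ r := Int.emod_nonneg j (ne_of_gt h2)
  have hr1 : r < n2 := Int.emod_lt_of_pos j h2
  have hjr : BZ k j = BZ k r := by
    apply BZ_mod
    rw [hrdef, Int.emod_def]
    exact ⟨-(j / n2), by ring⟩
  rw [hjr]
  have hpow : n2 = 2 * 2 ^ (k - 1) := by
    rw [hn2, ← pow_succ']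
    congr 1
    omega
  rcases eq_or_lt_of_le hr0 with h0 | hpos
  · rw [← h0, BZ_zero]
    exact ⟨Subgroup.one_mem _, one_pow 2⟩
  · by_cases hle : r ≤ 2 ^ (k - 1)
    · exact BZ_base k r hpos hle
    · push_neg at hle
      set t : ℤ := n2 - r with ht
      have ht1 : 1 ≤ t := by omega
      have ht2 : t ≤ 2 ^ (k - 1) := by omega
      obtain ⟨htc, hts⟩ := BZ_base k t ht1 ht2
      have hinv : (BZ k t)⁻¹ ∈ Subgroup.center (G k) := Subgroup.inv_mem _ htc
      have hrt : BZ k r = BZ k (-t) := by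
        apply BZ_mod
        exact ⟨-1, by rw [ht]; ring⟩
      have hneg : BZ k (-t) = (BZ k t)⁻¹ := by
        rw [BZ_neg_conj]
        have hmv := Subgroup.mem_center_iff.mp hinv (x k ^ t)
        rw [hmv, mul_assoc, ← zpow_add, add_neg_cancel, zpow_zero, mul_one]
      rw [hrt, hneg]
      refine ⟨hinv, ?_⟩
      rw [inv_pow, hts, inv_one]

lemma BZ_sq (hk : 1 ≤ k) (j : ℤ) : BZ k j ^ 2 = 1 := (BZ_central_sq k hk j).2

lemma BZ_central (hk : 1 ≤ k) (j : ℤ) : BZ k j ∈ Subgroup.center (G k) :=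
  (BZ_central_sq k hk j).1

lemma BZ_inv (hk : 1 ≤ k) (j : ℤ) : (BZ k j)⁻¹ = BZ k j := by
  have h := BZ_sq k hk j
  rw [pow_two] at h
  exact inv_eq_of_mul_eq_one_right h

lemma BZ_neg (hk : 1 ≤ k) (j : ℤ) : BZ k (-j) = BZ k j := by
  rw [BZ_neg_conj]
  have hinv : (BZ k j)⁻¹ ∈ Subgroup.center (G k) := Subgroup.inv_mem _ (BZ_central k hk j)
  have hmv := Subgroup.mem_center_iff.mp hinv (x k ^ j)
  rw [hmv, mul_assoc, ← zpow_add, add_neg_cancel, zpow_zero, mul_one, BZ_inv k hk]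


/-! ### center-valued commutators -/

def BC (hk : 1 ≤ k) (j : ℤ) : Subgroup.center (G k) := ⟨BZ k j, BZ_central k hk j⟩

variable {k} (hk : 1 ≤ k)

lemma BC_coe (j : ℤ) : ((BC k hk j : Subgroup.center (G k)) : G k) = BZ k j := rfl

lemma BC_sq (j : ℤ) : BC k hk j ^ 2 = 1 := by
  apply Subtype.ext
  push_cast [BC_coe]
  exact BZ_sq k hk j

lemma BC_inv (j : ℤ) : (BC k hk j)⁻¹ = BC k hk j := by
  apply Subtype.ext
  push_cast [BC_coe]
  exact BZ_inv k hk j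

lemma BC_neg (j : ℤ) : BC k hk (-j) = BC k hk j := Subtype.ext (BZ_neg k hk j)

lemma BC_mod {a b : ℤ} (h : (2 ^ k : ℤ) ∣ b - a) : BC k hk a = BC k hk b :=
  Subtype.ext (BZ_mod k h)

/-- the key pure-group-theory step -/
lemma comm_mul_step {M : Type*} [Group M] (u xx v v' P Q : M)
    (hv' : v' = xx * v * xx⁻¹)
    (hP : P = comm u v) (hQ : Q = comm u v')
    (hPc : ∀ g, g * P = P * g) (hQc : ∀ g, g * Q = Q * g) :
    comm (comm u xx) v = P⁻¹ * Q := by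
  have hPc' : ∀ g, g * P⁻¹ = P⁻¹ * g := by
    intro g
    have := hPc g
    calc g * P⁻¹ = P⁻¹ * (P * g) * P⁻¹ := by group
      _ = P⁻¹ * (g * P) * P⁻¹ := by rw [this]
      _ = P⁻¹ * g := by group
  have E1 : comm (comm u xx) v
      = (xx⁻¹ * u * xx)⁻¹ * comm u⁻¹ v * (xx⁻¹ * u * xx) * comm (xx⁻¹ * u * xx) v := by
    unfold comm; group
  have E2 : comm u⁻¹ v = u * P⁻¹ * u⁻¹ := by
    rw [hP]; unfold comm; group
  have E2' : comm u⁻¹ v = P⁻¹ := by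
    rw [E2, hPc' u]; group
  have E3 : comm (xx⁻¹ * u * xx) v = xx⁻¹ * Q * xx := by
    rw [hQ, hv']; unfold comm; group
  have E3' : comm (xx⁻¹ * u * xx) v = Q := by
    rw [E3, hQc xx⁻¹]; group
  rw [E1, E2', E3', hPc' (xx⁻¹ * u * xx)⁻¹]
  group

/-- the binomial formula for `[c_d, y_j]` -/
theorem comm_c_yg (d : ℕ) : ∀ j : ℤ,
    comm (c k d) (yg k j)
      = ((∏ l ∈ Finset.range (d + 1), BC k hk (j - l) ^ (d.choose l) :
          Subgroup.center (G k)) : G k) := by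
  induction d with
  | zero =>
    intro j
    rw [Finset.prod_range_one]
    show comm (y k) (yg k j) = _
    rw [← yg_zero k]
    have : comm (yg k 0) (yg k j) = BZ k j := rfl
    rw [this]
    norm_num [BC_coe]
  | succ d ih =>
    intro j
    have hPc : ∀ g, g * comm (c k d) (yg k j) = comm (c k d) (yg k j) * g := by
      intro g
      rw [ih j]
      exact (Subgroup.mem_center_iff.mp (SetLike.coe_mem _) g)
    have hQc : ∀ g, g * comm (c k d) (yg k (j - 1)) = comm (c k d) (yg k (j - 1)) * g := by
      intro g
      rw [ih (j - 1)]
      exact (Subgroup.mem_center_iff.mp (SetLike.coe_mem _) g)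
    have hstep := comm_mul_step (c k d) (x k) (yg k j) (yg k (j - 1))
      (comm (c k d) (yg k j)) (comm (c k d) (yg k (j - 1)))
      (conj_yg' k j).symm rfl rfl hPc hQc
    have hc : c k (d + 1) = comm (c k d) (x k) := rfl
    rw [hc, hstep, ih j, ih (j - 1)]
    -- now a computation inside the center
    rw [← Subgroup.coe_inv, ← Subgroup.coe_mul]
    congr 1
    -- reindex & Pascal, in the commutative group `center (G k)`
    have hinv : (∏ l ∈ Finset.range (d + 1), BC k hk (j - l) ^ (d.choose l))⁻¹
        = ∏ l ∈ Finset.range (d + 1), BC k hk (j - l) ^ (d.choose l) := by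
      rw [← Finset.prod_inv_distrib]
      refine Finset.prod_congr rfl fun l _ => ?_
      rw [← inv_pow, BC_inv]
    rw [hinv]
    have hshift : (∏ l ∈ Finset.range (d + 1), BC k hk (j - 1 - l) ^ (d.choose l))
        = ∏ l ∈ Finset.range (d + 2),
            BC k hk (j - l) ^ ((d + 1).choose l - d.choose l) := by
      conv_rhs => rw [Finset.prod_range_succ']
      simp only [Nat.choose_zero_right, Nat.sub_self, pow_zero, mul_one]
      refine Finset.prod_congr rfl fun i _ => ?_
      have hpascal : (d + 1).choose (i + 1) = d.choose i + d.choose (i + 1) := by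
        simpa using Nat.choose_succ_succ d i
      have hidx : j - 1 - (i : ℤ) = j - ((i : ℕ) + 1 : ℕ) := by push_cast; ring
      rw [hidx]
      congr 1
      omega
    have hext : (∏ l ∈ Finset.range (d + 1), BC k hk (j - l) ^ (d.choose l))
        = ∏ l ∈ Finset.range (d + 2), BC k hk (j - l) ^ (d.choose l) := by
      conv_rhs => rw [Finset.prod_range_succ]
      rw [Nat.choose_eq_zero_of_lt (Nat.lt_succ_self d), pow_zero, mul_one]
    rw [hext, hshift, ← Finset.prod_mul_distrib]
    refine Finset.prod_congr rfl fun l _ => ?_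
    rw [← pow_add]
    congr 1
    have := Nat.choose_le_choose l (Nat.le_succ d)
    simp only [Nat.succ_eq_add_one] at this ⊢
    omega


/-! ### the ring side -/

variable (k)

abbrev R := AddMonoidAlgebra (ZMod 2) (ZMod (2 ^ k))

instance : NeZero (2 ^ k) := ⟨pow_ne_zero k two_ne_zero⟩

noncomputable def ze (t : ZMod (2 ^ k)) : R k := AddMonoidAlgebra.single t 1

noncomputable def uu : R k := ze k 0 + ze k 1

variable {k}

lemma ze_mul (a b : ZMod (2 ^ k)) : ze k a * ze k b = ze k (a + b) := by
  unfold ze; rw [AddMonoidAlgebra.single_mul_single, one_mul]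

lemma ze_zero : ze k 0 = 1 := AddMonoidAlgebra.one_def.symm

lemma ze_pow (n : ℕ) (a : ZMod (2 ^ k)) : ze k a ^ n = ze k (n • a) := by
  unfold ze; rw [AddMonoidAlgebra.single_pow, one_pow]

lemma Rtwo (r : R k) : r + r = 0 := by
  have h : r + r = (2 : ZMod 2) • r := by rw [two_smul]
  rw [h, show (2 : ZMod 2) = 0 from rfl, zero_smul]

lemma nsmul_even_zero {m : ℕ} (hm : Even m) (r : R k) : m • r = 0 := by
  obtain ⟨t, ht⟩ := hm
  rw [ht, add_smul, Rtwo]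

lemma add_sq2 (a b : R k) : (a + b) ^ 2 = a ^ 2 + b ^ 2 := by
  have h : (a + b) ^ 2 = a ^ 2 + b ^ 2 + (a * b + a * b) := by ring
  rw [h, Rtwo, add_zero]

lemma add_pow_two_pow (n : ℕ) (a b : R k) : (a + b) ^ 2 ^ n = a ^ 2 ^ n + b ^ 2 ^ n := by
  induction n generalizing a b with
  | zero => simp
  | succ m ih =>
    rw [pow_succ, pow_mul, pow_mul, pow_mul, ih, add_sq2]

lemma uu_eq : uu k = 1 + ze k 1 := by rw [uu, ze_zero]

lemma ze_one_eq : ze k 1 = uu k + 1 := by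
  rw [uu_eq]
  linear_combination -(Rtwo (1 : R k))

lemma uu_pow_card : uu k ^ 2 ^ k = 0 := by
  rw [uu_eq, add_pow_two_pow, one_pow]
  have h1 : ze k 1 ^ 2 ^ k = ze k ((2 ^ k : ℕ) • (1 : ZMod (2 ^ k))) := ze_pow _ _
  have h2 : ((2 ^ k : ℕ) • (1 : ZMod (2 ^ k))) = 0 := by
    rw [nsmul_eq_mul, mul_one, ZMod.natCast_self]
  rw [h1, h2, ze_zero, Rtwo]

lemma uu_pow_zero {d : ℕ} (hd : 2 ^ k ≤ d) : uu k ^ d = 0 := by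
  have : d = 2 ^ k + (d - 2 ^ k) := by omega
  rw [this, pow_add, uu_pow_card, zero_mul]

lemma ze_natCast (s : ℕ) :
    ze k (s : ZMod (2 ^ k)) = ∑ l ∈ Finset.range (s + 1), s.choose l • uu k ^ l := by
  have h1 : ze k ((s : ZMod (2 ^ k))) = ze k 1 ^ s := by
    rw [ze_pow, nsmul_eq_mul, mul_one]
  rw [h1, ze_one_eq, add_pow]
  refine Finset.sum_congr rfl fun l _ => ?_
  rw [one_pow, mul_one, nsmul_eq_mul, mul_comm]


/-! ### membership combinatorics -/

variable (k)

noncomputable def J : AddSubgroup (R k) := AddSubgroup.closure {w | ∃ t, w = ze k t + ze k (-t)}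

noncomputable def Om (n : ℕ) : AddSubgroup (R k) :=
  AddSubgroup.closure {w | ∃ d : ℕ, Odd d ∧ n ≤ d ∧ w = uu k ^ d}

variable {k}

lemma upow_mem_Om {n d : ℕ} (hd : Odd d) (hnd : n ≤ d) : uu k ^ d ∈ Om k n :=
  AddSubgroup.subset_closure ⟨d, hd, hnd, rfl⟩

lemma Om_mono {n n' : ℕ} (h : n ≤ n') : Om k n' ≤ Om k n :=
  AddSubgroup.closure_mono (fun w ⟨d, hd, hnd, hw⟩ => ⟨d, hd, le_trans h hnd, hw⟩)

lemma Om_even_eq {n : ℕ} (hn : Even n) : Om k n = Om k (n + 1) := by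
  unfold Om
  congr 1
  ext w
  constructor
  · rintro ⟨d, hd, hnd, hw⟩
    refine ⟨d, hd, ?_, hw⟩
    obtain ⟨a, ha⟩ := hd
    obtain ⟨b, hb⟩ := hn
    omega
  · rintro ⟨d, hd, hnd, hw⟩
    exact ⟨d, hd, by omega, hw⟩

lemma ze_mul_upow (a : ZMod (2 ^ k)) (d : ℕ) :
    ze k a * uu k ^ d
      = ∑ m ∈ Finset.range (a.val + 1), a.val.choose m • uu k ^ (m + d) := by
  have h1 : ze k a = ze k ((a.val : ZMod (2 ^ k))) := by rw [ZMod.natCast_rightInverse a]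
  rw [h1, ze_natCast, Finset.sum_mul]
  refine Finset.sum_congr rfl fun m _ => ?_
  rw [smul_mul_assoc, pow_add]

/-- the central binomial coefficient is even -/
lemma central_choose_even {s : ℕ} (hs : 1 ≤ s) : Even ((2 * s).choose s) := by
  have h1 : 2 * s = (2 * s - 1) + 1 := by omega
  have h2 : s = (s - 1) + 1 := by omega
  have h3 : (2 * s).choose s = (2 * s - 1).choose (s - 1) + (2 * s - 1).choose s := by
    conv_lhs => rw [h1, h2, Nat.choose_succ_succ]
    congr 2 <;> omega
  have h4 : (2 * s - 1).choose (s - 1) = (2 * s - 1).choose s := by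
    have h5 : (2 * s - 1) - s = s - 1 := by omega
    rw [← h5, Nat.choose_symm (by omega)]
  rw [h3, h4]
  exact ⟨(2 * s - 1).choose s, rfl⟩

/-- the "symmetric part" lies in `J` -/
lemma Apart_mem_J {s : ℕ} (hs : 1 ≤ s) :
    ze k (-(s : ZMod (2 ^ k))) * uu k ^ (2 * s) ∈ J k := by
  set f : ℕ → R k := fun l => (2 * s).choose l • ze k ((l : ZMod (2 ^ k)) - s) with hf
  have hexp : ze k (-(s : ZMod (2 ^ k))) * uu k ^ (2 * s)
      = ∑ l ∈ Finset.range (2 * s + 1), f l := by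
    rw [show (uu k ^ (2 * s)) = ∑ l ∈ Finset.range (2 * s + 1),
        (2 * s).choose l • ze k ((l : ZMod (2 ^ k))) from ?_, Finset.mul_sum]
    · refine Finset.sum_congr rfl fun l _ => ?_
      rw [hf, mul_smul_comm, ze_mul]
      congr 2
      ring
    · have h1 : uu k = ze k 1 + 1 := by
        rw [ze_one_eq]
        linear_combination -(Rtwo (1 : R k))
      rw [h1, add_pow]
      refine Finset.sum_congr rfl fun l _ => ?_
      rw [one_pow, mul_one, ze_pow, nsmul_eq_mul, mul_one, nsmul_eq_mul, mul_comm]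
  rw [hexp]
  have hsplit : ∑ l ∈ Finset.range (2 * s + 1), f l
      = (∑ l ∈ Finset.range s, (f l + f (2 * s - l))) + f s := by
    have h1 : 2 * s + 1 = (s + 1) + s := by omega
    rw [h1, Finset.sum_range_add, Finset.sum_range_succ]
    have h2 : ∑ l ∈ Finset.range s, f (s + 1 + l)
        = ∑ l ∈ Finset.range s, f (2 * s - l) := by
      rw [← Finset.sum_range_reflect]
      refine Finset.sum_congr rfl fun l hl => ?_
      rw [Finset.mem_range] at hl
      congr 1
      omega
    rw [h2, Finset.sum_add_distrib]
    abel
  rw [hsplit]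
  simp only [hf]
  refine AddSubgroup.add_mem _ (AddSubgroup.sum_mem _ fun l hl => ?_) ?_
  · rw [Finset.mem_range] at hl
    have hc : (2 * s).choose (2 * s - l) = (2 * s).choose l := Nat.choose_symm (by omega)
    have hz : ((2 * s - l : ℕ) : ZMod (2 ^ k)) - s = -(((l : ZMod (2 ^ k))) - s) := by
      have h3 : ((2 * s - l : ℕ) : ZMod (2 ^ k)) = 2 * s - l := by
        push_cast [Nat.cast_sub (by omega : l ≤ 2 * s)]
        ring
      rw [h3]
      push_cast
      ring
    rw [hc, hz, ← smul_add]
    refine AddSubgroup.nsmul_mem _ ?_ _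
    show _ ∈ AddSubgroup.closure {w | ∃ t, w = ze k t + ze k (-t)}
    exact AddSubgroup.subset_closure ⟨(l : ZMod (2 ^ k)) - s, rfl⟩
  · simp only [sub_self]
    rw [nsmul_even_zero (central_choose_even hs)]
    exact AddSubgroup.zero_mem _

/-- main decomposition for even exponents -/
lemma even_decomp {s : ℕ} (hs : 1 ≤ s) :
    uu k ^ (2 * s) = ze k (-(s : ZMod (2 ^ k))) * uu k ^ (2 * s)
      + ∑ l ∈ Finset.range s,
          s.choose (l + 1) • (ze k (-(s : ZMod (2 ^ k))) * uu k ^ (2 * s + (l + 1))) := by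
  have h0 : ze k (-(s : ZMod (2 ^ k))) * (ze k ((s : ZMod (2 ^ k))) * uu k ^ (2 * s))
      = uu k ^ (2 * s) := by
    rw [← mul_assoc, ze_mul, neg_add_cancel, ze_zero, one_mul]
  conv_lhs => rw [← h0]
  rw [ze_natCast, Finset.sum_mul, Finset.mul_sum, Finset.sum_range_succ', add_comm]
  congr 1
  · rw [Nat.choose_zero_right, one_smul, pow_zero, one_mul]
  · refine Finset.sum_congr rfl fun l _ => ?_
    simp only [nsmul_eq_mul]
    ring

/-- the fueled downward induction -/
lemma upow_mem (hk : 1 ≤ k) : ∀ fuel n : ℕ, 1 ≤ n → 2 ^ k ≤ n + fuel →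
    uu k ^ n ∈ J k ⊔ Om k n := by
  intro fuel
  induction fuel with
  | zero =>
    intro n h1 h2
    rw [uu_pow_zero (by omega)]
    exact AddSubgroup.zero_mem _
  | succ f ih =>
    intro n h1 h2
    by_cases hbig : 2 ^ k ≤ n
    · rw [uu_pow_zero hbig]; exact AddSubgroup.zero_mem _
    by_cases hodd : Odd n
    · exact AddSubgroup.mem_sup_right (upow_mem_Om hodd le_rfl)
    push_neg at hbig
    rw [Nat.not_odd_iff_even] at hodd
    obtain ⟨t, hsn⟩ := hodd
    set s := t with hsdef
    have hs2 : n = 2 * s := by omega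
    have hs1 : 1 ≤ s := by omega
    rw [hs2, even_decomp hs1]
    refine AddSubgroup.add_mem _
      (AddSubgroup.mem_sup_left (Apart_mem_J hs1))
      (AddSubgroup.sum_mem _ fun l hl => AddSubgroup.nsmul_mem _ ?_ _)
    rw [ze_mul_upow]
    refine AddSubgroup.sum_mem _ fun m hm => AddSubgroup.nsmul_mem _ ?_ _
    have hmem := ih (m + (2 * s + (l + 1))) (by omega) (by omega)
    exact (sup_le_sup_left (Om_mono (by omega : 2 * s ≤ m + (2 * s + (l + 1)))) (J k)) hmem

/-- the ring-side main theorem -/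
theorem ring_main (hk : 1 ≤ k) {n : ℕ} (h2 : 2 ≤ n) (hle : n ≤ 2 ^ k - 2) (hev : Even n) :
    uu k ^ n ∈ J k ⊔ Om k (n + 1) := by
  rw [← Om_even_eq hev]
  exact upow_mem hk (2 ^ k) n (by omega) (by omega)



/-! ### the transfer homomorphism -/

lemma u_binom (d : ℕ) :
    uu k ^ d = ∑ l ∈ Finset.range (d + 1), d.choose l • ze k ((l : ZMod (2 ^ k))) := by
  have h1 : uu k = ze k 1 + 1 := by
    rw [ze_one_eq]
    linear_combination -(Rtwo (1 : R k))
  rw [h1, add_pow]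
  refine Finset.sum_congr rfl fun l _ => ?_
  rw [one_pow, mul_one, ze_pow, nsmul_eq_mul, mul_one, nsmul_eq_mul, mul_comm]

noncomputable def phiComp (hk : 1 ≤ k) (t : ZMod (2 ^ k)) :
    ZMod 2 →+ Additive (Subgroup.center (G k)) :=
  ZMod.lift 2 ⟨zmultiplesHom _ (Additive.ofMul (BC k hk ((t.val : ℤ)))), by
    rw [zmultiplesHom_apply, natCast_zsmul, ← ofMul_pow, BC_sq hk, ofMul_one]⟩

noncomputable def Phi (hk : 1 ≤ k) :
    R k →+ Additive (Subgroup.center (G k)) :=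
  (Finsupp.liftAddHom (phiComp hk)).comp AddMonoidAlgebra.coeffAddEquiv.toAddMonoidHom

lemma Phi_ze (hk : 1 ≤ k) (t : ZMod (2 ^ k)) :
    Phi hk (ze k t) = Additive.ofMul (BC k hk (t.val : ℤ)) := by
  have h0 : Phi hk (ze k t) = phiComp hk t 1 := Finsupp.liftAddHom_apply_single (phiComp hk) t 1
  rw [h0]
  have h1 : (1 : ZMod 2) = ((1 : ℤ) : ZMod 2) := by norm_num
  rw [phiComp, h1, ZMod.lift_coe, zmultiplesHom_apply, one_zsmul]

lemma BC_cast_eq (hk : 1 ≤ k) {a b : ℤ}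
    (h : ((a : ZMod (2 ^ k))) = (b : ZMod (2 ^ k))) : BC k hk a = BC k hk b := by
  have h2 := Int.ModEq.dvd ((ZMod.intCast_eq_intCast_iff _ _ _).mp h)
  exact BC_mod hk (by exact_mod_cast h2)

lemma Phi_ze_nat (hk : 1 ≤ k) (l : ℕ) :
    Phi hk (ze k (l : ZMod (2 ^ k))) = Additive.ofMul (BC k hk (l : ℤ)) := by
  rw [Phi_ze]
  congr 1
  apply BC_cast_eq hk
  push_cast
  exact ZMod.natCast_rightInverse _

lemma Phi_upow (hk : 1 ≤ k) (d : ℕ) :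
    (Phi hk (uu k ^ d)).toMul
      = ∏ l ∈ Finset.range (d + 1), BC k hk (l : ℤ) ^ d.choose l := by
  rw [u_binom, map_sum, toMul_sum]
  refine Finset.prod_congr rfl fun l _ => ?_
  rw [map_nsmul, Phi_ze_nat hk, toMul_nsmul, toMul_ofMul]

lemma comm_c_y (hk : 1 ≤ k) (d : ℕ) :
    comm (c k d) (y k) = (((Phi hk (uu k ^ d)).toMul : Subgroup.center (G k)) : G k) := by
  have h := comm_c_yg hk d 0
  rw [yg_zero] at h
  rw [h, Phi_upow hk]
  congr 1
  refine Finset.prod_congr rfl fun l _ => ?_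
  congr 1
  have h2 : (0 : ℤ) - l = -(l : ℤ) := by ring
  rw [h2, BC_neg hk]

lemma Phi_J_gen (hk : 1 ≤ k) (t : ZMod (2 ^ k)) : Phi hk (ze k t + ze k (-t)) = 0 := by
  rw [map_add, Phi_ze hk, Phi_ze hk, ← ofMul_mul]
  have h1 : BC k hk ((-t).val : ℤ) = BC k hk (-(t.val : ℤ)) := by
    apply BC_cast_eq hk
    push_cast
    rw [ZMod.natCast_rightInverse (-t), ZMod.natCast_rightInverse t]
  rw [h1, BC_neg hk, ← pow_two, BC_sq hk, ofMul_one]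

end Grp

/-- For every `k ≥ 1` and every even `m` with `2 ≤ m ≤ 2^k`, the element
`[y,x,…(m−2)…,x,y]` lies in `⟨[y,x,…(2j−1)…,x,y] : m/2 ≤ j ≤ 2^(k-1)⟩`. -/
theorem stmt13 (k : ℕ) (hk : 1 ≤ k) (m : ℕ) (h2 : 2 ≤ m) (hm : m ≤ 2 ^ k)
    (hev : m % 2 = 0) :
    comm (c k (m - 2)) (y k) ∈
      Subgroup.closure
        {g | ∃ j : ℕ, m / 2 ≤ j ∧ j ≤ 2 ^ (k - 1) ∧ g = comm (c k (2 * j - 1)) (y k)} := by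
  by_cases hm2 : m = 2
  · subst hm2
    have h0 : comm (c k (2 - 2)) (y k) = 1 := by
      show comm (y k) (y k) = 1
      unfold comm; group
    rw [h0]
    exact Subgroup.one_mem _
  · have hm4 : 4 ≤ m := by omega
    have h2k2 : 2 ≤ 2 ^ k := by
      calc 2 = 2 ^ 1 := by norm_num
        _ ≤ 2 ^ k := Nat.pow_le_pow_right (by norm_num) hk
    have hnev : Even (m - 2) := Nat.even_iff.mpr (by omega)
    have hkey := ring_main hk (n := m - 2) (by omega) (by omega) hnev
    rw [J, Om, ← AddSubgroup.closure_union] at hkey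
    have hind : ∀ f, f ∈ AddSubgroup.closure
        ({w | ∃ t, w = ze k t + ze k (-t)} ∪
          {w | ∃ d : ℕ, Odd d ∧ (m - 2) + 1 ≤ d ∧ w = uu k ^ d}) →
        (((Phi hk f).toMul : Subgroup.center (G k)) : G k) ∈ Subgroup.closure
          {g | ∃ j : ℕ, m / 2 ≤ j ∧ j ≤ 2 ^ (k - 1) ∧ g = comm (c k (2 * j - 1)) (y k)} := by
      intro f hf
      refine AddSubgroup.closure_induction ?_ ?_ ?_ ?_ hf
      · rintro w (⟨t, rfl⟩ | ⟨d, hdodd, hdge, rfl⟩)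
        · rw [Phi_J_gen hk]
          simpa using Subgroup.one_mem _
        · by_cases hbig : 2 ^ k ≤ d
          · rw [uu_pow_zero hbig, map_zero]
            simpa using Subgroup.one_mem _
          · push_neg at hbig
            obtain ⟨a, ha⟩ := hdodd
            have h2kk : 2 ^ k = 2 * 2 ^ (k - 1) := by
              rw [← pow_succ']
              congr 1
              omega
            refine Subgroup.subset_closure ⟨a + 1, by omega, by omega, ?_⟩
            rw [← comm_c_y hk]
            have hda : 2 * (a + 1) - 1 = d := by omega
            rw [hda]
      · rw [map_zero]
        simpa using Subgroup.one_mem _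
      · intro f g _ _ hf hg
        rw [map_add, toMul_add, Subgroup.coe_mul]
        exact Subgroup.mul_mem _ hf hg
      · intro f _ hf
        rw [map_neg, toMul_neg, Subgroup.coe_inv]
        exact Subgroup.inv_mem _ hf
    have hfin := hind _ hkey
    rw [← comm_c_y hk] at hfin
    exact hfin

end P2G
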